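/- Let O be a complete discrete valuation ring with uniformizer ϖ, and let M be an O-module such that M[ϖ^n] (the ϖ^n-torsion submodule) has finite length for every n ≥ 1. If M is not of bounded exponent (i.e. there is no n with ϖ^n M = 0 when restricted to the torsion, equivalently M ≠ M[ϖ^n] for all n), then the inverse limit of the system M[ϖ^{n}] with transition maps given by multiplication by ϖ (from M[ϖ^{n+1}] to M[ϖ^n]) is nonzero. -/

import Mathlib

/-- Let `R` be a complete discrete valuation ring with uniformizer `ϖ`, and
let `M` be an `R`-module such that `M[ϖ^n]` has finite length for every `n`.  If the torsion
of `M` is not of bounded exponent (for every `n` there is a torsion element not killed by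
`ϖ^n`), then the inverse limit of the system `M[ϖ^n]` with transition maps given by
multiplication by `ϖ` is nonzero: there is a compatible family `(f n)ₙ` with
`f n ∈ M[ϖ^{n+1}]`, `ϖ • f (n+1) = f n`, not all of whose members are zero. -/
theorem tate_limit_ne_zero_of_unbounded_exponent
    (R : Type*) [CommRing R] [IsDomain R] [IsDiscreteValuationRing R]
    [IsAdicComplete (IsLocalRing.maximalIdeal R) R]
    (ϖ : R) (hϖ : Irreducible ϖ)
    (M : Type*) [AddCommGroup M] [Module R M]
    (hlen : ∀ n : ℕ, IsFiniteLength R ↥(Submodule.torsionBy R M (ϖ ^ n)))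
    (hunbdd : ∀ n : ℕ, ∃ x ∈ Submodule.torsion R M, ϖ ^ n • x ≠ 0) :
    ∃ f : ℕ → M, (∀ n, ϖ ^ (n + 1) • f n = 0) ∧ (∀ n, ϖ • f (n + 1) = f n) ∧
      ∃ n, f n ≠ 0 := by
  classical
  set T : ℕ → Submodule R M := fun n => Submodule.torsionBy R M (ϖ ^ (n + 1)) with hT
  set I : ℕ → ℕ → Submodule R M :=
    fun n k => (T (n + k)).map (LinearMap.lsmul R M (ϖ ^ k)) with hI
  -- membership characterization
  have hmemI : ∀ n k (y : M), y ∈ I n k ↔ ∃ u, ϖ ^ (n + k + 1) • u = 0 ∧ ϖ ^ k • u = y := by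
    intro n k y
    simp only [hI, Submodule.mem_map, LinearMap.lsmul_apply, hT,
      Submodule.mem_torsionBy_iff]
  -- I n k ≤ T n
  have hIT : ∀ n k, I n k ≤ T n := by
    intro n k y hy
    obtain ⟨u, hu, rfl⟩ := (hmemI n k y).mp hy
    simp only [hT, Submodule.mem_torsionBy_iff]
    rw [smul_smul, ← pow_add]
    rw [show n + 1 + k = n + k + 1 by ring]
    exact hu
  -- antitone in k
  have hanti : ∀ n, ∀ {k k'}, k ≤ k' → I n k' ≤ I n k := by
    intro n k k' hkk'
    have step : ∀ j, I n (j + 1) ≤ I n j := by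
      intro j y hy
      obtain ⟨u, hu, rfl⟩ := (hmemI n (j + 1) y).mp hy
      refine (hmemI n j _).mpr ⟨ϖ • u, ?_, ?_⟩
      · rw [smul_smul, ← pow_succ]
        rw [show n + j + 1 + 1 = n + (j + 1) + 1 by ring]
        exact hu
      · rw [smul_smul, ← pow_succ]
    exact antitone_nat_of_succ_le step hkk'
  -- each I n k is nonzero
  have hne : ∀ n k, ∃ y ∈ I n k, y ≠ 0 := by
    intro n k
    obtain ⟨x, hxt, hx⟩ := hunbdd (n + k)
    obtain ⟨r, hr⟩ := hxt
    have hr0 : (r : R) ≠ 0 := nonZeroDivisors.coe_ne_zero r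
    obtain ⟨m, u, hu⟩ := IsDiscreteValuationRing.eq_unit_mul_pow_irreducible hr0 hϖ
    have hrx : (r : R) • x = 0 := hr
    have hkill : ∃ m, ϖ ^ m • x = 0 := by
      refine ⟨m, ?_⟩
      have h1 : ϖ ^ m • x = ((u⁻¹ : Rˣ) : R) • ((u : R) * ϖ ^ m) • x := by
        rw [smul_smul, ← mul_assoc, Units.inv_mul, one_mul]
      rw [h1, ← hu, hrx, smul_zero]
    set m0 := Nat.find hkill with hm0
    have hm0kill : ϖ ^ m0 • x = 0 := Nat.find_spec hkill
    have hlt : n + k < m0 := by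
      by_contra h
      push_neg at h
      apply hx
      rw [show n + k = n + k - m0 + m0 by omega, pow_add, mul_smul, hm0kill, smul_zero]
    refine ⟨ϖ ^ (m0 - (n + 1)) • x, ?_, ?_⟩
    · refine (hmemI n k _).mpr ⟨ϖ ^ (m0 - (n + k + 1)) • x, ?_, ?_⟩
      · rw [smul_smul, ← pow_add, show n + k + 1 + (m0 - (n + k + 1)) = m0 by omega]
        exact hm0kill
      · rw [smul_smul, ← pow_add, show k + (m0 - (n + k + 1)) = m0 - (n + 1) by omega]
    · exact Nat.find_min hkill (show m0 - (n + 1) < m0 by omega)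
  -- stabilization of the chain
  have hstab : ∀ n, ∃ K : ℕ, ∀ k, K ≤ k → I n k = I n K := by
    intro n
    haveI : IsArtinian R ↥(T n) :=
      (isFiniteLength_iff_isNoetherian_isArtinian.mp (hlen (n + 1))).2
    obtain ⟨K, hK⟩ := IsArtinian.monotone_stabilizes
      (f := ⟨fun k => OrderDual.toDual (Submodule.comap (T n).subtype (I n k)),
        fun a b hab => Submodule.comap_mono (hanti n hab)⟩)
    refine ⟨K, fun k hk => ?_⟩
    have h2 : Submodule.comap (T n).subtype (I n K)
        = Submodule.comap (T n).subtype (I n k) := hK k hk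
    have h3 := congrArg (Submodule.map (T n).subtype) h2
    rw [Submodule.map_comap_subtype, Submodule.map_comap_subtype,
      inf_eq_right.mpr (hIT n K), inf_eq_right.mpr (hIT n k)] at h3
    exact h3.symm
  choose K hK using hstab
  -- lifting
  have key : ∀ n, ∀ s ∈ I n (K n), ∃ t, t ∈ I (n + 1) (K (n + 1)) ∧ ϖ • t = s := by
    intro n s hs
    set k := max (K n) (K (n + 1) + 1) with hk
    have hs' : s ∈ I n k := by
      rw [hK n k (le_max_left _ _)]; exact hs
    obtain ⟨v, hv, hvs⟩ := (hmemI n k s).mp hs'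
    refine ⟨ϖ ^ (k - 1) • v, ?_, ?_⟩
    · rw [← hK (n + 1) (k - 1) (by omega)]
      refine (hmemI (n + 1) (k - 1) _).mpr ⟨v, ?_, rfl⟩
      rw [show n + 1 + (k - 1) + 1 = n + k + 1 by omega]
      exact hv
    · have h1 : ϖ * ϖ ^ (k - 1) = ϖ ^ k := by
        rw [← pow_succ']
        congr 1
        omega
      rw [smul_smul, h1, hvs]
  obtain ⟨x0, hx0S, hx0⟩ := hne 0 (K 0)
  choose lift hliftmem hlift using key
  let F : ∀ n : ℕ, {x : M // x ∈ I n (K n)} := fun n =>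
    Nat.rec (motive := fun n => {x : M // x ∈ I n (K n)}) ⟨x0, hx0S⟩
      (fun n p => ⟨lift n p.1 p.2, hliftmem n p.1 p.2⟩) n
  refine ⟨fun n => (F n).1, fun n => ?_, fun n => hlift n _ _, 0, hx0⟩
  have := hIT n (K n) (F n).2
  simpa only [hT, Submodule.mem_torsionBy_iff] using this
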